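/- Let p be a prime and r >= 1. Define the (r+1) x (r+1) matrices Upsilon(p^r) (tridiagonal as above: Upsilon_{i,j} = p if i=j=0 or i=j=r, p^{min(j,r-j)-1}(p^2+1) if 1<=i=j<=r-1, -p^{min(j,r-j)} if |i-j|=1, 0 otherwise) and Lambda'(p^r) with entries Lambda'_{i,j} = p^{r - min(i, r-i) + 2*min(i,j) - i - j} for 0 <= i, j <= r (these exponents are nonnegative integers). Then Upsilon(p^r) * Lambda'(p^r) = Lambda'(p^r) * Upsilon(p^r) = p^{r-1}(p^2 - 1) * Id, where Id is the identity matrix of size r+1. -/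
import Mathlib


/-- The tridiagonal matrix `Υ(p^r)`, indexed by `0, 1, …, r`. -/
def Upsilon (p r : ℕ) : Matrix (Fin (r + 1)) (Fin (r + 1)) ℤ := fun i j =>
  if (i : ℕ) = (j : ℕ) then
    (if (j : ℕ) = 0 ∨ (j : ℕ) = r then (p : ℤ)
     else (p : ℤ) ^ (min (j : ℕ) (r - (j : ℕ)) - 1) * ((p : ℤ) ^ 2 + 1))
  else if (i : ℕ) = (j : ℕ) + 1 ∨ (j : ℕ) = (i : ℕ) + 1 then
    -(p : ℤ) ^ (min (j : ℕ) (r - (j : ℕ)))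
  else 0

/-- The matrix `Λ'(p^r) = 24·Λ(p^r)`, with entries
`p^(r - min(i, r-i) + 2 min(i,j) - i - j)`. -/
def Lambda' (p r : ℕ) : Matrix (Fin (r + 1)) (Fin (r + 1)) ℤ := fun i j =>
  (p : ℤ) ^ (r - min (i : ℕ) (r - (i : ℕ)) + 2 * min (i : ℕ) (j : ℕ) - (i : ℕ) - (j : ℕ))

/- ### Auxiliary ℕ-indexed versions of the two matrices -/

private def uu (p r : ℕ) : ℕ → ℕ → ℤ := fun i j =>
  if i = j then
    (if j = 0 ∨ j = r then (p : ℤ)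
     else (p : ℤ) ^ (min j (r - j) - 1) * ((p : ℤ) ^ 2 + 1))
  else if i = j + 1 ∨ j = i + 1 then -(p : ℤ) ^ (min j (r - j)) else 0

private def ll (p r : ℕ) : ℕ → ℕ → ℤ :=
  fun i j => (p : ℤ) ^ (r - min i (r - i) + 2 * min i j - i - j)

/- ### Sums with only two or three nonzero terms -/

private lemma sum_two (f : ℕ → ℤ) (n a : ℕ) (h : a + 1 < n)
    (h0 : ∀ j, j < n → j ≠ a → j ≠ a + 1 → f j = 0) :
    ∑ j ∈ Finset.range n, f j = f a + f (a + 1) := by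
  have hs : ({a, a+1} : Finset ℕ) ⊆ Finset.range n := by
    intro x hx; simp at hx ⊢; omega
  have h0' : ∀ x ∈ Finset.range n, x ∉ ({a, a+1} : Finset ℕ) → f x = 0 := by
    intro x hx hnx
    simp only [Finset.mem_insert, Finset.mem_singleton, not_or] at hnx
    exact h0 x (Finset.mem_range.mp hx) hnx.1 hnx.2
  rw [← Finset.sum_subset hs h0', Finset.sum_pair (by omega)]

private lemma sum_three (f : ℕ → ℤ) (n a : ℕ) (h : a + 2 < n)
    (h0 : ∀ j, j < n → j ≠ a → j ≠ a + 1 → j ≠ a + 2 → f j = 0) :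
    ∑ j ∈ Finset.range n, f j = f a + f (a + 1) + f (a + 2) := by
  have hs : ({a, a+1, a+2} : Finset ℕ) ⊆ Finset.range n := by
    intro x hx; simp at hx ⊢; omega
  have h0' : ∀ x ∈ Finset.range n, x ∉ ({a, a+1, a+2} : Finset ℕ) → f x = 0 := by
    intro x hx hnx
    simp only [Finset.mem_insert, Finset.mem_singleton, not_or] at hnx
    exact h0 x (Finset.mem_range.mp hx) hnx.1 hnx.2.1 hnx.2.2
  rw [← Finset.sum_subset hs h0', Finset.sum_insert (by simp),
    Finset.sum_pair (by omega)]
  ring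

/- ### Power-juggling key lemmas -/

private lemma key2eq (p : ℤ) (A B C E : ℕ) (h1 : A = E + 1) (h2 : B + C = E) :
    p * p ^ A + -p ^ B * p ^ C = p ^ E * (p ^ 2 - 1) := by
  rw [neg_mul, ← pow_add, h1, h2]; ring

private lemma key2ne (p : ℤ) (A B C : ℕ) (h : B + C = A + 1) :
    p * p ^ A + -p ^ B * p ^ C = 0 := by
  rw [neg_mul, ← pow_add, h]; ring

private lemma key2eq' (p : ℤ) (A B C E : ℕ) (h1 : A = E + 1) (h2 : B + C = E) :
    -p ^ B * p ^ C + p * p ^ A = p ^ E * (p ^ 2 - 1) := by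
  rw [neg_mul, ← pow_add, h1, h2]; ring

private lemma key2ne' (p : ℤ) (A B C : ℕ) (h : B + C = A + 1) :
    -p ^ B * p ^ C + p * p ^ A = 0 := by
  rw [neg_mul, ← pow_add, h]; ring

private lemma key3eq (p : ℤ) (A B C D E F G : ℕ)
    (h1 : A + B = G) (h2 : C + D = G) (h3 : E + F = G) :
    -p ^ A * p ^ B + p ^ C * (p ^ 2 + 1) * p ^ D + -p ^ E * p ^ F =
      p ^ G * (p ^ 2 - 1) := by
  rw [neg_mul, neg_mul, ← pow_add, ← pow_add, h1, h3,
    show p ^ C * (p ^ 2 + 1) * p ^ D = p ^ (C + D) * (p ^ 2 + 1) by rw [pow_add]; ring, h2]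
  ring

private lemma key3ne₁ (p : ℤ) (A B C D E F : ℕ) (G : ℕ)
    (h1 : A + B = G + 2) (h2 : C + D = G) (h3 : E + F = G) :
    -p ^ A * p ^ B + p ^ C * (p ^ 2 + 1) * p ^ D + -p ^ E * p ^ F = 0 := by
  rw [neg_mul, neg_mul, ← pow_add, ← pow_add, h1, h3,
    show p ^ C * (p ^ 2 + 1) * p ^ D = p ^ (C + D) * (p ^ 2 + 1) by rw [pow_add]; ring, h2]
  ring

private lemma key3ne₂ (p : ℤ) (A B C D E F : ℕ) (G : ℕ)
    (h1 : A + B = G) (h2 : C + D = G) (h3 : E + F = G + 2) :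
    -p ^ A * p ^ B + p ^ C * (p ^ 2 + 1) * p ^ D + -p ^ E * p ^ F = 0 := by
  rw [neg_mul, neg_mul, ← pow_add, ← pow_add, h1, h3,
    show p ^ C * (p ^ 2 + 1) * p ^ D = p ^ (C + D) * (p ^ 2 + 1) by rw [pow_add]; ring, h2]
  ring

private lemma keyL2eq (p : ℤ) (A B C E : ℕ) (h1 : A = E + 1) (h2 : B + C = E) :
    p ^ A * p + p ^ B * -p ^ C = p ^ E * (p ^ 2 - 1) := by
  rw [mul_neg, ← pow_add, h1, h2]; ring

private lemma keyL2ne (p : ℤ) (A B C : ℕ) (h : B + C = A + 1) :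
    p ^ A * p + p ^ B * -p ^ C = 0 := by
  rw [mul_neg, ← pow_add, h]; ring

private lemma keyL2eq' (p : ℤ) (A B C E : ℕ) (h1 : A = E + 1) (h2 : B + C = E) :
    p ^ B * -p ^ C + p ^ A * p = p ^ E * (p ^ 2 - 1) := by
  rw [mul_neg, ← pow_add, h1, h2]; ring

private lemma keyL2ne' (p : ℤ) (A B C : ℕ) (h : B + C = A + 1) :
    p ^ B * -p ^ C + p ^ A * p = 0 := by
  rw [mul_neg, ← pow_add, h]; ring

private lemma keyL3eq (p : ℤ) (A B C D E F G : ℕ)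
    (h1 : A + B = G) (h2 : C + D = G) (h3 : E + F = G) :
    p ^ A * -p ^ B + p ^ C * (p ^ D * (p ^ 2 + 1)) + p ^ E * -p ^ F =
      p ^ G * (p ^ 2 - 1) := by
  rw [mul_neg, mul_neg, ← pow_add, ← pow_add, h1, h3,
    show p ^ C * (p ^ D * (p ^ 2 + 1)) = p ^ (C + D) * (p ^ 2 + 1) by rw [pow_add]; ring, h2]
  ring

private lemma keyL3ne₁ (p : ℤ) (A B C D E F : ℕ) (G : ℕ)
    (h1 : A + B = G + 2) (h2 : C + D = G) (h3 : E + F = G) :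
    p ^ A * -p ^ B + p ^ C * (p ^ D * (p ^ 2 + 1)) + p ^ E * -p ^ F = 0 := by
  rw [mul_neg, mul_neg, ← pow_add, ← pow_add, h1, h3,
    show p ^ C * (p ^ D * (p ^ 2 + 1)) = p ^ (C + D) * (p ^ 2 + 1) by rw [pow_add]; ring, h2]
  ring

private lemma keyL3ne₂ (p : ℤ) (A B C D E F : ℕ) (G : ℕ)
    (h1 : A + B = G) (h2 : C + D = G) (h3 : E + F = G + 2) :
    p ^ A * -p ^ B + p ^ C * (p ^ D * (p ^ 2 + 1)) + p ^ E * -p ^ F = 0 := by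
  rw [mul_neg, mul_neg, ← pow_add, ← pow_add, h1, h3,
    show p ^ C * (p ^ D * (p ^ 2 + 1)) = p ^ (C + D) * (p ^ 2 + 1) by rw [pow_add]; ring, h2]
  ring

/- ### The two scalar sum computations -/

private lemma sumUL (p r : ℕ) (hr : 1 ≤ r) (i k : ℕ) (hi : i ≤ r) (hk : k ≤ r) :
    ∑ j ∈ Finset.range (r + 1), uu p r i j * ll p r j k =
      if i = k then (p : ℤ) ^ (r - 1) * ((p : ℤ) ^ 2 - 1) else 0 := by
  rcases eq_or_ne i 0 with rfl | hi0
  · -- first row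
    have hz : ∀ j, j < r + 1 → j ≠ 0 → j ≠ 0 + 1 → uu p r 0 j * ll p r j k = 0 := by
      intro j hj h1 h2
      unfold uu; rw [if_neg (by omega), if_neg (by omega), zero_mul]
    rw [sum_two _ _ 0 (by omega) hz]
    have e1 : uu p r 0 0 = (p : ℤ) := by unfold uu; rw [if_pos rfl, if_pos (by omega)]
    have e2 : uu p r 0 (0 + 1) = -(p : ℤ) ^ (min (0 + 1) (r - (0 + 1))) := by
      unfold uu; rw [if_neg (by omega), if_pos (by omega)]
    rw [e1, e2]
    simp only [ll]
    rcases eq_or_ne k 0 with rfl | hk0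
    · rw [if_pos rfl]
      refine key2eq p _ _ _ _ ?_ ?_ <;> omega
    · rw [if_neg (show ¬(0 = k) by omega)]
      refine key2ne p _ _ _ ?_; omega
  rcases eq_or_ne i r with hir | hir
  · -- last row
    obtain ⟨b, rfl⟩ : ∃ b, r = b + 1 := ⟨r - 1, by omega⟩
    subst hir
    have hz : ∀ j, j < b + 1 + 1 → j ≠ b → j ≠ b + 1 →
        uu p (b + 1) (b + 1) j * ll p (b + 1) j k = 0 := by
      intro j hj h1 h2
      unfold uu; rw [if_neg (by omega), if_neg (by omega), zero_mul]
    rw [sum_two _ _ b (by omega) hz]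
    have e1 : uu p (b + 1) (b + 1) b = -(p : ℤ) ^ (min b (b + 1 - b)) := by
      unfold uu; rw [if_neg (by omega), if_pos (by omega)]
    have e2 : uu p (b + 1) (b + 1) (b + 1) = (p : ℤ) := by
      unfold uu; rw [if_pos rfl, if_pos (by omega)]
    rw [e1, e2]
    simp only [ll]
    rcases eq_or_ne k (b + 1) with rfl | hk1
    · rw [if_pos rfl]
      refine key2eq' p _ _ _ _ ?_ ?_ <;> omega
    · rw [if_neg (show ¬(b + 1 = k) by omega)]
      refine key2ne' p _ _ _ ?_; omega
  · -- interior row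
    obtain ⟨a, rfl⟩ : ∃ a, i = a + 1 := ⟨i - 1, by omega⟩
    have ha2 : a + 2 ≤ r := by omega
    have hz : ∀ j, j < r + 1 → j ≠ a → j ≠ a + 1 → j ≠ a + 2 →
        uu p r (a + 1) j * ll p r j k = 0 := by
      intro j hj h1 h2 h3
      unfold uu; rw [if_neg (by omega), if_neg (by omega), zero_mul]
    rw [sum_three _ _ a (by omega) hz]
    have e1 : uu p r (a + 1) a = -(p : ℤ) ^ (min a (r - a)) := by
      unfold uu; rw [if_neg (by omega), if_pos (by omega)]
    have e2 : uu p r (a + 1) (a + 1) =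
        (p : ℤ) ^ (min (a + 1) (r - (a + 1)) - 1) * ((p : ℤ) ^ 2 + 1) := by
      unfold uu; rw [if_pos rfl, if_neg (by omega)]
    have e3 : uu p r (a + 1) (a + 2) = -(p : ℤ) ^ (min (a + 2) (r - (a + 2))) := by
      unfold uu; rw [if_neg (by omega), if_pos (by omega)]
    rw [e1, e2, e3]
    simp only [ll]
    rcases lt_trichotomy (a + 1) k with h | rfl | h
    · rw [if_neg (show ¬(a + 1 = k) by omega)]
      refine key3ne₂ p _ _ _ _ _ _ (r - (k - (a + 1)) - 1) ?_ ?_ ?_ <;> omega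
    · rw [if_pos rfl]
      refine key3eq p _ _ _ _ _ _ _ ?_ ?_ ?_ <;> omega
    · rw [if_neg (show ¬(a + 1 = k) by omega)]
      refine key3ne₁ p _ _ _ _ _ _ (r - (a + 1 - k) - 1) ?_ ?_ ?_ <;> omega

private lemma sumLU (p r : ℕ) (hr : 1 ≤ r) (i k : ℕ) (hi : i ≤ r) (hk : k ≤ r) :
    ∑ j ∈ Finset.range (r + 1), ll p r i j * uu p r j k =
      if i = k then (p : ℤ) ^ (r - 1) * ((p : ℤ) ^ 2 - 1) else 0 := by
  rcases eq_or_ne k 0 with rfl | hk0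
  · -- first column
    have hz : ∀ j, j < r + 1 → j ≠ 0 → j ≠ 0 + 1 → ll p r i j * uu p r j 0 = 0 := by
      intro j hj h1 h2
      unfold uu; rw [if_neg (by omega), if_neg (by omega), mul_zero]
    rw [sum_two _ _ 0 (by omega) hz]
    have e1 : uu p r 0 0 = (p : ℤ) := by unfold uu; rw [if_pos rfl, if_pos (by omega)]
    have e2 : uu p r (0 + 1) 0 = -(p : ℤ) ^ (min 0 (r - 0)) := by
      unfold uu; rw [if_neg (by omega), if_pos (by omega)]
    rw [e1, e2]
    simp only [ll]
    rcases eq_or_ne i 0 with rfl | hi0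
    · rw [if_pos rfl]
      refine keyL2eq p _ _ _ _ ?_ ?_ <;> omega
    · rw [if_neg hi0]
      refine keyL2ne p _ _ _ ?_; omega
  rcases eq_or_ne k r with hkr | hkr
  · -- last column
    obtain ⟨b, rfl⟩ : ∃ b, r = b + 1 := ⟨r - 1, by omega⟩
    subst hkr
    have hz : ∀ j, j < b + 1 + 1 → j ≠ b → j ≠ b + 1 →
        ll p (b + 1) i j * uu p (b + 1) j (b + 1) = 0 := by
      intro j hj h1 h2
      unfold uu; rw [if_neg (by omega), if_neg (by omega), mul_zero]
    rw [sum_two _ _ b (by omega) hz]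
    have e1 : uu p (b + 1) b (b + 1) = -(p : ℤ) ^ (min (b + 1) (b + 1 - (b + 1))) := by
      unfold uu; rw [if_neg (by omega), if_pos (by omega)]
    have e2 : uu p (b + 1) (b + 1) (b + 1) = (p : ℤ) := by
      unfold uu; rw [if_pos rfl, if_pos (by omega)]
    rw [e1, e2]
    simp only [ll]
    rcases eq_or_ne i (b + 1) with rfl | hi1
    · rw [if_pos rfl]
      refine keyL2eq' p _ _ _ _ ?_ ?_ <;> omega
    · rw [if_neg hi1]
      refine keyL2ne' p _ _ _ ?_; omega
  · -- interior column
    obtain ⟨c, rfl⟩ : ∃ c, k = c + 1 := ⟨k - 1, by omega⟩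
    have hc2 : c + 2 ≤ r := by omega
    have hz : ∀ j, j < r + 1 → j ≠ c → j ≠ c + 1 → j ≠ c + 2 →
        ll p r i j * uu p r j (c + 1) = 0 := by
      intro j hj h1 h2 h3
      unfold uu; rw [if_neg (by omega), if_neg (by omega), mul_zero]
    rw [sum_three _ _ c (by omega) hz]
    have e1 : uu p r c (c + 1) = -(p : ℤ) ^ (min (c + 1) (r - (c + 1))) := by
      unfold uu; rw [if_neg (by omega), if_pos (by omega)]
    have e2 : uu p r (c + 1) (c + 1) =
        (p : ℤ) ^ (min (c + 1) (r - (c + 1)) - 1) * ((p : ℤ) ^ 2 + 1) := by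
      unfold uu; rw [if_pos rfl, if_neg (by omega)]
    have e3 : uu p r (c + 2) (c + 1) = -(p : ℤ) ^ (min (c + 1) (r - (c + 1))) := by
      unfold uu; rw [if_neg (by omega), if_pos (by omega)]
    rw [e1, e2, e3]
    simp only [ll]
    rcases lt_trichotomy i (c + 1) with h | rfl | h
    · rw [if_neg (show ¬(i = c + 1) by omega)]
      refine keyL3ne₁ p _ _ _ _ _ _
        (min (c + 1) (r - (c + 1)) + (r - min i (r - i)) - (c + 1 - i) - 1) ?_ ?_ ?_ <;> omega
    · rw [if_pos rfl]
      refine keyL3eq p _ _ _ _ _ _ _ ?_ ?_ ?_ <;> omega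
    · rw [if_neg (show ¬(i = c + 1) by omega)]
      refine keyL3ne₂ p _ _ _ _ _ _
        (min (c + 1) (r - (c + 1)) + (r - min i (r - i)) - (i - c - 1) - 1) ?_ ?_ ?_ <;> omega

/-- Lemma 3.7 for prime powers: `Υ(p^r) · Λ'(p^r) = Λ'(p^r) · Υ(p^r) = p^(r-1)(p^2-1)·Id`. -/
theorem upsilon_mul_lambda (p r : ℕ) (hp : p.Prime) (hr : 1 ≤ r) :
    Upsilon p r * Lambda' p r =
        ((p : ℤ) ^ (r - 1) * ((p : ℤ) ^ 2 - 1)) • (1 : Matrix (Fin (r + 1)) (Fin (r + 1)) ℤ) ∧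
    Lambda' p r * Upsilon p r =
        ((p : ℤ) ^ (r - 1) * ((p : ℤ) ^ 2 - 1)) • (1 : Matrix (Fin (r + 1)) (Fin (r + 1)) ℤ) := by
  constructor
  · ext i k
    have h1 : (Upsilon p r * Lambda' p r) i k =
        ∑ j ∈ Finset.range (r + 1), uu p r i j * ll p r j k := by
      rw [Matrix.mul_apply]
      exact Fin.sum_univ_eq_sum_range (fun j => uu p r (i : ℕ) j * ll p r j (k : ℕ)) (r + 1)
    rw [h1, sumUL p r hr i k (Nat.lt_succ_iff.mp i.is_lt) (Nat.lt_succ_iff.mp k.is_lt)]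
    rw [Matrix.smul_apply, Matrix.one_apply]
    by_cases h : (i : ℕ) = (k : ℕ)
    · rw [if_pos h, if_pos (Fin.ext h), smul_eq_mul, mul_one]
    · rw [if_neg h, if_neg (fun hc => h (congrArg Fin.val hc)), smul_eq_mul, mul_zero]
  · ext i k
    have h1 : (Lambda' p r * Upsilon p r) i k =
        ∑ j ∈ Finset.range (r + 1), ll p r i j * uu p r j k := by
      rw [Matrix.mul_apply]
      exact Fin.sum_univ_eq_sum_range (fun j => ll p r (i : ℕ) j * uu p r j (k : ℕ)) (r + 1)
    rw [h1, sumLU p r hr i k (Nat.lt_succ_iff.mp i.is_lt) (Nat.lt_succ_iff.mp k.is_lt)]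
    rw [Matrix.smul_apply, Matrix.one_apply]
    by_cases h : (i : ℕ) = (k : ℕ)
    · rw [if_pos h, if_pos (Fin.ext h), smul_eq_mul, mul_one]
    · rw [if_neg h, if_neg (fun hc => h (congrArg Fin.val hc)), smul_eq_mul, mul_zero]
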